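/- Let t_{p,δ} denote the density of the noncentral t distribution with p degrees of freedom and noncentrality δ ≥ 0, and t_p = t_{p,0}. Then as x → ∞, the likelihood ratio satisfies t_{p,δ}(x)/t_p(x) = r − d·x^{−2} + o(x^{−2}), where r = e^{−δ²/2} Σ_{k≥0} C_k (√2 δ)^k, d = (e^{−δ²/2} p/2) Σ_{k≥1} k C_k (√2 δ)^k, and C_k = Γ((p+1+k)/2)/(k! Γ((p+1)/2)); in particular r = sup_x t_{p,δ}(x)/t_p(x) is finite. -/

import Mathlib

open Filter Topology Asymptotics

/-- C_k = Γ((p+1+k)/2) / (k! Γ((p+1)/2)). -/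
noncomputable def nctC (p : ℝ) (k : ℕ) : ℝ :=
  Real.Gamma ((p + 1 + k) / 2) / (k.factorial * Real.Gamma ((p + 1) / 2))

/-- Density of the noncentral t distribution with p degrees of freedom and
noncentrality δ. -/
noncomputable def nctDensity (p δ x : ℝ) : ℝ :=
  (p ^ (p / 2) * Real.Gamma ((p + 1) / 2) / (Real.sqrt Real.pi * Real.Gamma (p / 2)))
    * Real.exp (-δ ^ 2 / 2) * (p + x ^ 2) ^ (-(p + 1) / 2)
    * ∑' k : ℕ, nctC p k * (Real.sqrt 2 * δ) ^ k * (x ^ 2 / (p + x ^ 2)) ^ ((k : ℝ) / 2)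


lemma nctC_pos {p : ℝ} (hp : 0 < p) (k : ℕ) : 0 < nctC p k := by
  unfold nctC
  apply div_pos
  · exact Real.Gamma_pos_of_pos (by positivity)
  · exact mul_pos (by exact_mod_cast k.factorial_pos) (Real.Gamma_pos_of_pos (by positivity))


lemma nctC_rec {p : ℝ} (hp : 0 < p) (k : ℕ) :
    nctC p (k + 2) = nctC p k * ((p + 1 + k) / (2 * (k + 1) * (k + 2))) := by
  unfold nctC
  have h1 : (p + 1 + (k + 2 : ℕ)) / 2 = (p + 1 + k) / 2 + 1 := by push_cast; ring
  rw [h1, Real.Gamma_add_one (by positivity)]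
  have h2 : ((k + 2 : ℕ).factorial : ℝ) = (k + 1) * (k + 2) * k.factorial := by
    rw [Nat.factorial_succ, Nat.factorial_succ]; push_cast; ring
  rw [h2]
  have hΓ : Real.Gamma ((p + 1) / 2) ≠ 0 := ne_of_gt (Real.Gamma_pos_of_pos (by positivity))
  have hf : (k.factorial : ℝ) ≠ 0 := by exact_mod_cast k.factorial_ne_zero
  field_simp


lemma nct_step {p s : ℝ} (hp : 0 < p) (hs : 0 ≤ s) :
    ∃ N : ℕ, ∀ k : ℕ, N ≤ k →
      ((k : ℝ) + 2 + 1) * nctC p (k + 2) * s ^ (k + 2)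
        ≤ (1 / 2) * (((k : ℝ) + 1) * nctC p k * s ^ k) := by
  obtain ⟨N, hN⟩ := exists_nat_ge (max (p + 1) (4 * s ^ 2))
  refine ⟨N, fun k hk => ?_⟩
  have hkN : max (p + 1) (4 * s ^ 2) ≤ (k : ℝ) := hN.trans (by exact_mod_cast hk)
  have hk1 : p + 1 ≤ (k : ℝ) := (le_max_left _ _).trans hkN
  have hk2 : 4 * s ^ 2 ≤ (k : ℝ) := (le_max_right _ _).trans hkN
  have hC := nctC_pos hp k
  have hs2 : s ^ (k + 2) = s ^ k * s ^ 2 := by ring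
  rw [nctC_rec hp k, hs2]
  have hkey : ((k : ℝ) + 2 + 1) * ((p + 1 + k) / (2 * (k + 1) * (k + 2))) * s ^ 2
      ≤ (1 / 2) * ((k : ℝ) + 1) := by
    have hd : (0:ℝ) < 2 * ((k:ℝ) + 1) * ((k:ℝ) + 2) := by positivity
    have hre : ((k:ℝ) + 2 + 1) * ((p + 1 + (k:ℝ)) / (2 * ((k:ℝ) + 1) * ((k:ℝ) + 2))) * s ^ 2
        = (((k:ℝ) + 2 + 1) * (p + 1 + (k:ℝ)) * s ^ 2) / (2 * ((k:ℝ) + 1) * ((k:ℝ) + 2)) := by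
      ring
    rw [hre, div_le_iff₀ hd]
    have hb : p + 1 + (k:ℝ) ≤ 2 * (k:ℝ) := by linarith
    have h4 : ((k:ℝ) + 2 + 1) * (p + 1 + (k:ℝ)) * (4 * s ^ 2)
        ≤ ((k:ℝ) + 2 + 1) * (2 * (k:ℝ)) * (k:ℝ) := by
      have hnn : (0:ℝ) ≤ p + 1 + (k:ℝ) := by linarith
      have hnn2 : (0:ℝ) ≤ (k:ℝ) + 2 + 1 := by positivity
      calc ((k:ℝ) + 2 + 1) * (p + 1 + (k:ℝ)) * (4 * s ^ 2)
          ≤ ((k:ℝ) + 2 + 1) * (2 * (k:ℝ)) * (4 * s ^ 2) := by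
            apply mul_le_mul_of_nonneg_right (by nlinarith) (by positivity)
        _ ≤ ((k:ℝ) + 2 + 1) * (2 * (k:ℝ)) * (k:ℝ) := by
            have hl : (0:ℝ) ≤ ((k:ℝ) + 2 + 1) * (2 * (k:ℝ)) := by positivity
            exact mul_le_mul_of_nonneg_left hk2 hl
    nlinarith [h4, (Nat.cast_nonneg k : (0:ℝ) ≤ (k:ℝ)), sq_nonneg s]
  have hsk : (0:ℝ) ≤ s ^ k := by positivity
  calc ((k : ℝ) + 2 + 1) * (nctC p k * ((p + 1 + k) / (2 * (k + 1) * (k + 2)))) * (s ^ k * s ^ 2)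
      = (((k : ℝ) + 2 + 1) * ((p + 1 + k) / (2 * (k + 1) * (k + 2))) * s ^ 2) * (nctC p k * s ^ k) := by ring
    _ ≤ ((1 / 2) * ((k : ℝ) + 1)) * (nctC p k * s ^ k) := by
        apply mul_le_mul_of_nonneg_right hkey (by positivity)
    _ = (1 / 2) * (((k : ℝ) + 1) * nctC p k * s ^ k) := by ring


lemma nct_summable_master {p s : ℝ} (hp : 0 < p) (hs : 0 ≤ s) :
    Summable (fun k : ℕ => ((k : ℝ) + 1) * nctC p k * s ^ k) := by
  obtain ⟨N, hN⟩ := nct_step hp hs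
  set F : ℕ → ℝ := fun k => ((k : ℝ) + 1) * nctC p k * s ^ k with hF
  have hFnn : ∀ k, 0 ≤ F k := fun k => by
    have := nctC_pos hp k; positivity
  apply Summable.even_add_odd
  · apply summable_of_ratio_norm_eventually_le (r := 1/2) (by norm_num)
    filter_upwards [eventually_ge_atTop N] with n hn
    have h2 : 2 * (n + 1) = 2 * n + 2 := by ring
    rw [h2]
    rw [Real.norm_of_nonneg (hFnn _), Real.norm_of_nonneg (hFnn _)]
    have := hN (2 * n) (by omega)
    simpa [hF] using this
  · apply summable_of_ratio_norm_eventually_le (r := 1/2) (by norm_num)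
    filter_upwards [eventually_ge_atTop N] with n hn
    have h2 : 2 * (n + 1) + 1 = (2 * n + 1) + 2 := by ring
    rw [h2]
    rw [Real.norm_of_nonneg (hFnn _), Real.norm_of_nonneg (hFnn _)]
    have := hN (2 * n + 1) (by omega)
    simpa [hF] using this


lemma nct_summable_pow {p : ℝ} (hp : 0 < p) (c : ℝ) :
    Summable (fun k : ℕ => nctC p k * c ^ k) := by
  apply Summable.of_norm_bounded (nct_summable_master hp (abs_nonneg c))
  intro k
  have hC := nctC_pos hp k
  rw [norm_mul, norm_pow, Real.norm_of_nonneg hC.le, Real.norm_eq_abs]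
  have h1 : (1:ℝ) ≤ (k:ℝ) + 1 := by
    linarith [(Nat.cast_nonneg k : (0:ℝ) ≤ (k:ℝ))]
  calc nctC p k * |c| ^ k = 1 * nctC p k * |c| ^ k := by ring
    _ ≤ ((k:ℝ) + 1) * nctC p k * |c| ^ k := by
        apply mul_le_mul_of_nonneg_right (mul_le_mul_of_nonneg_right h1 hC.le) (by positivity)


lemma nct_summable_id_pow {p : ℝ} (hp : 0 < p) (c : ℝ) :
    Summable (fun k : ℕ => (k : ℝ) * nctC p k * c ^ k) := by
  apply Summable.of_norm_bounded (nct_summable_master hp (abs_nonneg c))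
  intro k
  have hC := nctC_pos hp k
  rw [norm_mul, norm_pow, norm_mul, Real.norm_of_nonneg hC.le, Real.norm_eq_abs,
    Real.norm_eq_abs, Nat.abs_cast]
  have h1 : (k:ℝ) ≤ (k:ℝ) + 1 := by linarith
  apply mul_le_mul_of_nonneg_right (mul_le_mul_of_nonneg_right h1 hC.le) (by positivity)


lemma nct_hasDerivAt {p : ℝ} (t : ℝ) (hp : 0 < p) :
    HasDerivAt (fun y : ℝ => ∑' k : ℕ, nctC p k * t ^ k * y ^ k)
      (∑' k : ℕ, (k : ℝ) * nctC p k * t ^ k) 1 := by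
  have hu : Summable (fun k : ℕ => ((k : ℝ) + 1) * nctC p k * (2 * |t|) ^ k) :=
    nct_summable_master hp (by positivity)
  have key : HasDerivAt (fun y : ℝ => ∑' k : ℕ, nctC p k * t ^ k * y ^ k)
      (∑' k : ℕ, nctC p k * t ^ k * ((k : ℝ) * (1:ℝ) ^ (k - 1))) 1 := by
    apply hasDerivAt_tsum_of_isPreconnected
      (g' := fun (k : ℕ) (y : ℝ) => nctC p k * t ^ k * ((k:ℝ) * y ^ (k - 1)))
      hu (isOpen_Ioo (a := (-2:ℝ)) (b := 2)) (isPreconnected_Ioo) (y₀ := 1)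
    · intro k y _
      exact (hasDerivAt_pow k y).const_mul (nctC p k * t ^ k)
    · intro k y hy
      have hC := nctC_pos hp k
      have hy2 : |y| ≤ 2 := by
        rw [abs_le]; exact ⟨hy.1.le, hy.2.le⟩
      simp only [norm_mul, norm_pow, Real.norm_eq_abs, Nat.abs_cast, abs_of_pos hC]
      have hb : (k:ℝ) * |y| ^ (k - 1) ≤ ((k:ℝ) + 1) * 2 ^ k := by
        have h1 : |y| ^ (k - 1) ≤ 2 ^ (k - 1) :=
          pow_le_pow_left₀ (abs_nonneg y) hy2 _
        have h2 : (2:ℝ) ^ (k - 1) ≤ 2 ^ k := pow_le_pow_right₀ one_le_two (Nat.sub_le k 1)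
        have h3 : (k:ℝ) ≤ (k:ℝ) + 1 := by linarith
        calc (k:ℝ) * |y| ^ (k - 1) ≤ (k:ℝ) * 2 ^ (k - 1) :=
              mul_le_mul_of_nonneg_left h1 (Nat.cast_nonneg k)
          _ ≤ (k:ℝ) * 2 ^ k := mul_le_mul_of_nonneg_left h2 (Nat.cast_nonneg k)
          _ ≤ ((k:ℝ) + 1) * 2 ^ k := mul_le_mul_of_nonneg_right h3 (by positivity)
      calc nctC p k * |t| ^ k * ((k:ℝ) * |y| ^ (k - 1))
          ≤ nctC p k * |t| ^ k * (((k:ℝ) + 1) * 2 ^ k) := by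
            apply mul_le_mul_of_nonneg_left hb (by positivity)
        _ = ((k:ℝ) + 1) * nctC p k * (2 * |t|) ^ k := by rw [mul_pow]; ring
    · exact Set.mem_Ioo.2 ⟨by norm_num, by norm_num⟩
    · simpa using nct_summable_pow hp t
    · exact Set.mem_Ioo.2 ⟨by norm_num, by norm_num⟩
  convert key using 2
  funext k
  rw [one_pow]
  ring


lemma nct_ratio {p : ℝ} (δ : ℝ) (hp : 0 < p) (x : ℝ) :
    nctDensity p δ x / nctDensity p 0 x
      = Real.exp (-δ ^ 2 / 2)
        * ∑' k : ℕ, nctC p k * (Real.sqrt 2 * δ) ^ k * Real.sqrt (x ^ 2 / (p + x ^ 2)) ^ k := by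
  have hq : 0 < p + x ^ 2 := by positivity
  set A := p ^ (p / 2) * Real.Gamma ((p + 1) / 2) / (Real.sqrt Real.pi * Real.Gamma (p / 2))
    with hA_def
  have hA : 0 < A := by
    apply div_pos
    · exact mul_pos (Real.rpow_pos_of_pos hp _) (Real.Gamma_pos_of_pos (by positivity))
    · exact mul_pos (Real.sqrt_pos.2 Real.pi_pos) (Real.Gamma_pos_of_pos (by positivity))
  set B := (p + x ^ 2) ^ (-(p + 1) / 2) with hB_def
  have hB : 0 < B := Real.rpow_pos_of_pos hq _
  have h0 : nctC p 0 = 1 := by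
    unfold nctC
    simp only [Nat.cast_zero, add_zero, Nat.factorial_zero, Nat.cast_one, one_mul]
    exact div_self (ne_of_gt (Real.Gamma_pos_of_pos (by positivity)))
  have hden : nctDensity p 0 x = A * B := by
    rw [hA_def, hB_def]
    unfold nctDensity
    rw [tsum_eq_single 0 (fun k hk => by simp [zero_pow hk])]
    norm_num [h0]
  have hnum : nctDensity p δ x = A * Real.exp (-δ ^ 2 / 2) * B
      * ∑' k : ℕ, nctC p k * (Real.sqrt 2 * δ) ^ k * Real.sqrt (x ^ 2 / (p + x ^ 2)) ^ k := by
    unfold nctDensity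
    congr 1
    apply tsum_congr
    intro k
    congr 1
    have hu : (0:ℝ) ≤ x ^ 2 / (p + x ^ 2) := by positivity
    rw [show ((k:ℝ) / 2) = (1/2 : ℝ) * (k:ℝ) by ring, Real.rpow_mul hu, Real.rpow_natCast,
      ← Real.sqrt_eq_rpow]
  rw [hnum, hden]
  set S := ∑' k : ℕ, nctC p k * (Real.sqrt 2 * δ) ^ k * Real.sqrt (x ^ 2 / (p + x ^ 2)) ^ k
  have h1 : A * Real.exp (-δ ^ 2 / 2) * B * S = (Real.exp (-δ ^ 2 / 2) * S) * (A * B) := by ring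
  rw [h1, mul_div_assoc, div_self (by positivity), mul_one]


lemma nct_W_limit {p : ℝ} (hp : 0 < p) :
    Tendsto (fun x : ℝ => (Real.sqrt (x ^ 2 / (p + x ^ 2)) - 1) * x ^ 2) atTop (𝓝 (-(p / 2))) := by
  have hs : Tendsto (fun x : ℝ => Real.sqrt (1 + p / x ^ 2)) atTop (𝓝 1) := by
    have h0 : Tendsto (fun x : ℝ => 1 + p / x ^ 2) atTop (𝓝 1) := by
      have h1 : Tendsto (fun x : ℝ => p / x ^ 2) atTop (𝓝 0) :=
        tendsto_const_nhds.div_atTop (tendsto_pow_atTop two_ne_zero)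
      simpa using tendsto_const_nhds.add h1
    have := (Real.continuous_sqrt.tendsto 1).comp h0
    simpa [Function.comp_def] using this
  have hmain : Tendsto (fun x : ℝ =>
      -(p / (Real.sqrt (1 + p / x ^ 2) * (Real.sqrt (1 + p / x ^ 2) + 1)))) atTop
      (𝓝 (-(p / 2))) := by
    have hden : Tendsto (fun x : ℝ =>
        Real.sqrt (1 + p / x ^ 2) * (Real.sqrt (1 + p / x ^ 2) + 1)) atTop (𝓝 2) := by
      have h2 := hs.mul (hs.add (tendsto_const_nhds (x := (1:ℝ))))
      norm_num at h2
      exact h2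
    have := (tendsto_const_nhds (x := p)).div hden (by norm_num)
    exact this.neg
  apply hmain.congr'
  filter_upwards [eventually_gt_atTop (0:ℝ)] with x hx
  have hq : 0 < p + x ^ 2 := by positivity
  have hsqpos : 0 < Real.sqrt (p + x ^ 2) := Real.sqrt_pos.2 hq
  have hsq2 : Real.sqrt (p + x ^ 2) ^ 2 = p + x ^ 2 := Real.sq_sqrt hq.le
  have hW : Real.sqrt (x ^ 2 / (p + x ^ 2)) = x / Real.sqrt (p + x ^ 2) := by
    rw [Real.sqrt_div (sq_nonneg x), Real.sqrt_sq hx.le]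
  have hs1 : Real.sqrt (1 + p / x ^ 2) = Real.sqrt (p + x ^ 2) / x := by
    rw [show 1 + p / x ^ 2 = (p + x ^ 2) / x ^ 2 by field_simp; ring,
      Real.sqrt_div hq.le, Real.sqrt_sq hx.le]
  rw [hW, hs1]
  set q := Real.sqrt (p + x ^ 2)
  field_simp
  linear_combination hsq2

/-- As x → ∞, t_{p,δ}(x)/t_p(x) = r − d x^{−2} + o(x^{−2}), with
r = e^{−δ²/2} Σ_k C_k(√2 δ)^k and d = (e^{−δ²/2} p/2) Σ_{k≥1} k C_k(√2 δ)^k;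
in particular r = sup_x t_{p,δ}(x)/t_p(x) < ∞. -/
theorem stmt18 (p δ : ℝ) (hp : 0 < p) (hδ : 0 ≤ δ)
    (r d : ℝ)
    (hr : r = Real.exp (-δ ^ 2 / 2) * ∑' k : ℕ, nctC p k * (Real.sqrt 2 * δ) ^ k)
    (hd : d = Real.exp (-δ ^ 2 / 2) * p / 2
        * ∑' k : ℕ, (k : ℝ) * nctC p k * (Real.sqrt 2 * δ) ^ k) :
    Tendsto (fun x : ℝ =>
        (nctDensity p δ x / nctDensity p 0 x - (r - d / x ^ 2)) * x ^ 2)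
      atTop (nhds 0)
    ∧ (⨆ x : ℝ, nctDensity p δ x / nctDensity p 0 x) = r := by
  set t := Real.sqrt 2 * δ with ht_def
  have ht : 0 ≤ t := mul_nonneg (Real.sqrt_nonneg 2) hδ
  set c := Real.exp (-δ ^ 2 / 2) with hc_def
  have hc : 0 < c := Real.exp_pos _
  set W : ℝ → ℝ := fun x => Real.sqrt (x ^ 2 / (p + x ^ 2)) with hW_def
  set g : ℝ → ℝ := fun y => ∑' k : ℕ, nctC p k * t ^ k * y ^ k with hg_def
  set D : ℝ := ∑' k : ℕ, (k : ℝ) * nctC p k * t ^ k with hD_def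
  have hratio : ∀ x, nctDensity p δ x / nctDensity p 0 x = c * g (W x) :=
    fun x => nct_ratio δ hp x
  have hgD : HasDerivAt g D 1 := nct_hasDerivAt t hp
  have hg1 : g 1 = ∑' k : ℕ, nctC p k * t ^ k := by
    apply tsum_congr; intro k; rw [one_pow, mul_one]
  have hr' : r = c * g 1 := by rw [hr, hg1]
  -- limit of W
  have h0 : Tendsto (fun x : ℝ => p / x ^ 2) atTop (𝓝 0) :=
    tendsto_const_nhds.div_atTop (tendsto_pow_atTop two_ne_zero)
  have h1 : Tendsto (fun x : ℝ => 1 + p / x ^ 2) atTop (𝓝 1) := by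
    simpa using tendsto_const_nhds.add h0
  have h2 : Tendsto (fun x : ℝ => (1 + p / x ^ 2)⁻¹) atTop (𝓝 1) := by
    simpa using h1.inv₀ one_ne_zero
  have h3 : Tendsto (fun x : ℝ => x ^ 2 / (p + x ^ 2)) atTop (𝓝 1) := by
    apply h2.congr'
    filter_upwards [eventually_gt_atTop (0:ℝ)] with x hx
    have hq : (0:ℝ) < p + x ^ 2 := by positivity
    field_simp
    ring
  have hW1 : Tendsto W atTop (𝓝 1) := by
    have := (Real.continuous_sqrt.tendsto 1).comp h3
    simpa [hW_def, Function.comp_def] using this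
  have hWx : Tendsto (fun x => (W x - 1) * x ^ 2) atTop (𝓝 (-(p / 2))) := nct_W_limit hp
  -- little-o machinery
  have ho : (fun y => g y - g 1 - (y - 1) * D) =o[𝓝 1] (fun y => y - 1) := by
    simpa [smul_eq_mul] using hasDerivAt_iff_isLittleO.mp hgD
  have ho2 : (fun x => g (W x) - g 1 - (W x - 1) * D) =o[atTop] (fun x => W x - 1) :=
    ho.comp_tendsto hW1
  have ho3 : (fun x => (g (W x) - g 1 - (W x - 1) * D) * x ^ 2)
      =o[atTop] (fun x => (W x - 1) * x ^ 2) := ho2.mul_isBigO (isBigO_refl _ _)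
  have hb : (fun x => (W x - 1) * x ^ 2) =O[atTop] (fun _ : ℝ => (1:ℝ)) := hWx.isBigO_one ℝ
  have T1 : Tendsto (fun x => (g (W x) - g 1 - (W x - 1) * D) * x ^ 2) atTop (𝓝 0) :=
    isLittleO_one_iff ℝ |>.1 (ho3.trans_isBigO hb)
  have T3 : Tendsto (fun x => (g (W x) - g 1) * x ^ 2) atTop (𝓝 (0 + -(p / 2) * D)) := by
    have T2 := hWx.mul_const D
    apply (T1.add T2).congr
    intro x; ring
  constructor
  · have Tfin : Tendsto (fun x => c * ((g (W x) - g 1) * x ^ 2) + d) atTop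
        (𝓝 (c * (0 + -(p / 2) * D) + d)) := (T3.const_mul c).add_const d
    have hval : c * (0 + -(p / 2) * D) + d = 0 := by rw [hd]; ring
    rw [hval] at Tfin
    apply Tfin.congr'
    filter_upwards [eventually_ne_atTop (0:ℝ)] with x hx
    rw [hratio x, hr']
    have hx2 : (x:ℝ) ^ 2 ≠ 0 := pow_ne_zero _ hx
    field_simp
    ring
  · have hgle : ∀ x, g (W x) ≤ g 1 := by
      intro x
      have hW0 : 0 ≤ W x := Real.sqrt_nonneg _
      have hWle : W x ≤ 1 := by
        show Real.sqrt (x ^ 2 / (p + x ^ 2)) ≤ 1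
        apply Real.sqrt_le_one.mpr
        rw [div_le_one (by positivity)]
        linarith
      apply Summable.tsum_le_tsum
      · intro k
        have hC := nctC_pos hp k
        have hnn : 0 ≤ nctC p k * t ^ k := mul_nonneg hC.le (pow_nonneg ht k)
        rw [one_pow]
        exact mul_le_mul_of_nonneg_left (pow_le_one₀ hW0 hWle) hnn
      · apply Summable.congr (nct_summable_pow hp (t * W x))
        intro k; rw [mul_pow]; ring
      · simpa [hg1] using nct_summable_pow hp t
    have hub : ∀ x, nctDensity p δ x / nctDensity p 0 x ≤ r := by
      intro x
      rw [hratio x, hr']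
      exact mul_le_mul_of_nonneg_left (hgle x) hc.le
    have hbdd : BddAbove (Set.range fun x => nctDensity p δ x / nctDensity p 0 x) := by
      refine ⟨r, ?_⟩
      rintro y ⟨x, rfl⟩
      exact hub x
    have htend : Tendsto (fun x => nctDensity p δ x / nctDensity p 0 x) atTop (𝓝 r) := by
      have h4 : Tendsto (fun x => c * g (W x)) atTop (𝓝 (c * g 1)) :=
        ((hgD.continuousAt.tendsto).comp hW1).const_mul c
      rw [hr']
      exact h4.congr fun x => (hratio x).symm
    apply le_antisymm
    · exact ciSup_le hub
    · exact le_of_tendsto htend (Eventually.of_forall fun x => le_ciSup hbdd x)
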